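/- If F is both long-tailed and dominatedly varying tailed, then F is subexponential; that is, L ∩ D ⊂ S. -/

import Mathlib

open MeasureTheory ProbabilityTheory Filter Topology Set

set_option linter.unusedSectionVars false
set_option linter.unusedVariables false

/-- The (right) tail function of a measure on `ℝ`. -/
noncomputable def tail (μ : MeasureTheory.Measure ℝ) (x : ℝ) : ℝ := (μ (Set.Ioi x)).toReal

/-- A distribution is long-tailed if `F̄(x+y) ~ F̄(x)` for every `y`. -/
def LongTailed (μ : MeasureTheory.Measure ℝ) : Prop :=
  (∀ x : ℝ, 0 < μ (Set.Ioi x)) ∧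
  ∀ y : ℝ, Filter.Tendsto (fun x => tail μ (x + y) / tail μ x) Filter.atTop (nhds 1)

/-- A distribution supported on `[0,∞)` is subexponential if `F̄^{*2}(x) ~ 2 F̄(x)`. -/
def Subexponential (μ : MeasureTheory.Measure ℝ) : Prop :=
  (∀ x : ℝ, 0 < μ (Set.Ioi x)) ∧ μ (Set.Iio 0) = 0 ∧
  Filter.Tendsto (fun x => tail (μ.conv μ) x / tail μ x) Filter.atTop (nhds 2)

/-- Membership in the class `H(F)` of insensitivity functions of a long-tailed `F`. -/
structure MemH (μ : MeasureTheory.Measure ℝ) (h : ℝ → ℝ) : Prop where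
  nonneg : ∀ x, 0 ≤ x → 0 ≤ h x
  mono : MonotoneOn h (Set.Ici 0)
  tendsto_atTop : Filter.Tendsto h Filter.atTop Filter.atTop
  ratio_anti : AntitoneOn (fun x => h x / x) (Set.Ioi 0)
  ratio_zero : Filter.Tendsto (fun x => h x / x) Filter.atTop (nhds 0)
  tail_insensitive :
    Filter.Tendsto (fun x => tail μ (x - h x) / tail μ x) Filter.atTop (nhds 1)

section Aux

variable {μ : MeasureTheory.Measure ℝ} [IsProbabilityMeasure μ]

lemma tail_nonneg' (x : ℝ) : 0 ≤ tail μ x := ENNReal.toReal_nonneg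

lemma tail_anti' : Antitone (tail μ) := fun a b hab =>
  ENNReal.toReal_mono (measure_ne_top _ _) (measure_mono (Ioi_subset_Ioi hab))

lemma tail_tendsto_zero' : Tendsto (tail μ) atTop (𝓝 0) := by
  have h : Tendsto (fun x => μ (Set.Ioi x)) atTop (𝓝 (μ (⋂ x : ℝ, Set.Ioi x))) :=
    tendsto_measure_iInter_atTop (fun i => measurableSet_Ioi.nullMeasurableSet)
      (fun a b hab => Ioi_subset_Ioi hab) ⟨0, measure_ne_top _ _⟩
  have h2 : (⋂ x : ℝ, Set.Ioi x) = ∅ := by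
    ext y; simp only [mem_iInter, mem_Ioi, mem_empty_iff_false, iff_false, not_forall, not_lt]
    exact ⟨y, le_refl y⟩
  rw [h2, measure_empty] at h
  have := (ENNReal.tendsto_toReal (by simp)).comp h
  exact (by simpa [Function.comp_def] using this :
    Tendsto (fun x => (μ (Set.Ioi x)).toReal) atTop (𝓝 0))

lemma conv_Ioi' (x : ℝ) :
    (μ.conv μ) (Set.Ioi x) = (μ.prod μ) {p : ℝ × ℝ | x < p.1 + p.2} := by
  rw [Measure.conv, Measure.map_apply measurable_add measurableSet_Ioi]
  rfl

lemma tail_conv_le' (x T : ℝ) :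
    tail (μ.conv μ) x ≤ 2 * tail μ (x - T) + 2 * tail μ T * tail μ (x / 2) := by
  have incl : {p : ℝ × ℝ | x < p.1 + p.2} ⊆
      (univ ×ˢ Ioi (x - T)) ∪ (Ioi T ×ˢ Ioi (x / 2)) ∪
      ((Ioi (x - T) ×ˢ univ) ∪ (Ioi (x / 2) ×ˢ Ioi T)) := by
    rintro ⟨a, b⟩ hab
    simp only [mem_setOf_eq] at hab
    simp only [mem_union, mem_prod, mem_Ioi, mem_univ, true_and, and_true]
    rcases le_or_gt a (x / 2) with h1 | h1
    · have hb : x / 2 < b := by linarith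
      rcases le_or_gt a T with h2 | h2
      · exact Or.inl (Or.inl (by linarith))
      · exact Or.inl (Or.inr ⟨h2, hb⟩)
    · rcases le_or_gt b T with h2 | h2
      · exact Or.inr (Or.inl (by linarith))
      · exact Or.inr (Or.inr ⟨h1, h2⟩)
  have hEN : (μ.conv μ) (Set.Ioi x) ≤
      μ (Ioi (x - T)) + μ (Ioi T) * μ (Ioi (x / 2)) +
      (μ (Ioi (x - T)) + μ (Ioi (x / 2)) * μ (Ioi T)) := by
    rw [conv_Ioi']
    refine (measure_mono incl).trans ?_
    refine (measure_union_le _ _).trans (add_le_add ((measure_union_le _ _).trans ?_)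
      ((measure_union_le _ _).trans ?_)) <;>
      simp [Measure.prod_prod, measure_univ]
  have h2 : tail (μ.conv μ) x ≤ (μ (Ioi (x - T)) + μ (Ioi T) * μ (Ioi (x / 2)) +
      (μ (Ioi (x - T)) + μ (Ioi (x / 2)) * μ (Ioi T))).toReal := by
    refine ENNReal.toReal_mono ?_ hEN
    finiteness
  refine h2.trans_eq ?_
  rw [ENNReal.toReal_add (by finiteness) (by finiteness),
      ENNReal.toReal_add (by finiteness) (by finiteness),
      ENNReal.toReal_add (by finiteness) (by finiteness),
      ENNReal.toReal_mul, ENNReal.toReal_mul]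
  simp only [tail]
  ring

lemma tail_conv_ge' (hsupp : μ (Set.Iio 0) = 0) (x : ℝ) (hx : 0 ≤ x) :
    tail μ x * (2 - tail μ x) ≤ tail (μ.conv μ) x := by
  have hIci : μ (Set.Ici 0) = 1 := by
    have := measure_compl (measurableSet_Iio (a := (0:ℝ))) (measure_ne_top μ _)
    rw [hsupp] at this
    simpa using this
  have hIcc : (μ (Set.Icc 0 x)).toReal = 1 - tail μ x := by
    have hU : Set.Icc 0 x ∪ Set.Ioi x = Set.Ici 0 := Set.Icc_union_Ioi_eq_Ici hx
    have hdisj : Disjoint (Set.Icc 0 x) (Set.Ioi x) :=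
      Set.disjoint_left.mpr fun a ha ha' => absurd ha' (not_lt.mpr ha.2)
    have := measure_union (μ := μ) hdisj measurableSet_Ioi
    rw [hU, hIci] at this
    have h1 : (μ (Set.Icc 0 x)).toReal + tail μ x = 1 := by
      rw [tail, ← ENNReal.toReal_add (by finiteness) (by finiteness), ← this]
      simp
    linarith
  have hdisj : Disjoint (Ioi x ×ˢ Ici (0:ℝ)) (Icc 0 x ×ˢ Ioi x) := by
    rw [Set.disjoint_left]
    rintro ⟨a, b⟩ ⟨ha, _⟩ ⟨ha', _⟩
    exact absurd ha'.2 (not_le.mpr ha)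
  have hsub : (Ioi x ×ˢ Ici (0:ℝ)) ∪ (Icc 0 x ×ˢ Ioi x) ⊆ {p : ℝ × ℝ | x < p.1 + p.2} := by
    rintro ⟨a, b⟩ (⟨ha, hb⟩ | ⟨ha, hb⟩) <;> simp only [mem_setOf_eq] <;>
      simp only [mem_Ioi, mem_Ici, mem_Icc] at * <;> [linarith; linarith [ha.1]]
  have hEN : μ (Ioi x) * μ (Ici 0) + μ (Icc 0 x) * μ (Ioi x) ≤ (μ.conv μ) (Set.Ioi x) := by
    rw [conv_Ioi', ← Measure.prod_prod, ← Measure.prod_prod,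
        ← measure_union hdisj (measurableSet_Icc.prod measurableSet_Ioi)]
    exact measure_mono hsub
  have h2 : (μ (Ioi x) * μ (Ici 0) + μ (Icc 0 x) * μ (Ioi x)).toReal ≤ tail (μ.conv μ) x :=
    ENNReal.toReal_mono (by finiteness) hEN
  calc tail μ x * (2 - tail μ x)
      = tail μ x * 1 + (1 - tail μ x) * tail μ x := by ring
    _ = (μ (Ioi x) * μ (Ici 0) + μ (Icc 0 x) * μ (Ioi x)).toReal := by
        rw [ENNReal.toReal_add (by finiteness) (by finiteness), ENNReal.toReal_mul,
            ENNReal.toReal_mul, hIci, hIcc]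
        simp [tail]
    _ ≤ _ := h2

lemma half_bound'
    (hD : ∃ t : ℝ, 0 < t ∧ t < 1 ∧ ∃ C : ℝ, ∀ᶠ x in atTop, tail μ (t * x) ≤ C * tail μ x) :
    ∃ C : ℝ, 0 ≤ C ∧ ∀ᶠ x in atTop, tail μ (x / 2) ≤ C * tail μ x := by
  obtain ⟨t, ht0, ht1, C, hC⟩ := hD
  set C' := max C 1 with hC'def
  have hC'1 : (1:ℝ) ≤ C' := le_max_right _ _
  have hC' : ∀ᶠ x in atTop, tail μ (t * x) ≤ C' * tail μ x := hC.mono fun x hx =>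
    hx.trans (mul_le_mul_of_nonneg_right (le_max_left _ _) (tail_nonneg' _))
  have key : ∀ n : ℕ, ∀ᶠ x in atTop, tail μ (t ^ n * x) ≤ C' ^ n * tail μ x := by
    intro n; induction n with
    | zero => exact Eventually.of_forall fun x => by simp
    | succ n ih =>
      have hmul : Tendsto (fun x : ℝ => t * x) atTop atTop :=
        Tendsto.const_mul_atTop ht0 tendsto_id
      filter_upwards [hmul.eventually ih, hC'] with x h1 h2
      have e1 : t ^ (n+1) * x = t ^ n * (t * x) := by ring
      calc tail μ (t ^ (n+1) * x) = tail μ (t ^ n * (t * x)) := by rw [e1]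
        _ ≤ C' ^ n * tail μ (t * x) := h1
        _ ≤ C' ^ n * (C' * tail μ x) :=
            mul_le_mul_of_nonneg_left h2 (by positivity)
        _ = C' ^ (n+1) * tail μ x := by ring
  obtain ⟨n, hn⟩ := exists_pow_lt_of_lt_one one_half_pos ht1
  refine ⟨C' ^ n, by positivity, ?_⟩
  filter_upwards [key n, eventually_ge_atTop 0] with x hx hx0
  have htn : (0:ℝ) ≤ t ^ n := pow_nonneg ht0.le n
  have : tail μ (x / 2) ≤ tail μ (t ^ n * x) := tail_anti' (by nlinarith)
  exact this.trans hx

end Aux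

/-- A distribution on [0,∞) that is both long-tailed and of dominated variation
is subexponential: L ∩ D ⊂ S. -/
theorem longTailed_dominatedVarying_subexponential (μ : MeasureTheory.Measure ℝ)
    [MeasureTheory.IsProbabilityMeasure μ] (hsupp : μ (Set.Iio 0) = 0)
    (hL : LongTailed μ)
    (hD : ∃ t : ℝ, 0 < t ∧ t < 1 ∧ ∃ C : ℝ, ∀ᶠ x in Filter.atTop,
      tail μ (t * x) ≤ C * tail μ x) :
    Subexponential μ := by
  refine ⟨hL.1, hsupp, ?_⟩
  obtain ⟨C, hC0, hCev⟩ := half_bound' hD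
  have hpos : ∀ x, 0 < tail μ x := fun x =>
    ENNReal.toReal_pos (hL.1 x).ne' (measure_ne_top _ _)
  rw [Metric.tendsto_nhds]
  intro ε hε
  have hlow : ∀ᶠ x in atTop, 2 - ε < tail (μ.conv μ) x / tail μ x := by
    have h0 : ∀ᶠ x in atTop, tail μ x < ε :=
      (tail_tendsto_zero' (μ := μ)).eventually_lt_const hε
    filter_upwards [h0, eventually_ge_atTop 0] with x hx hx0
    have hlb := tail_conv_ge' hsupp x hx0
    have hp := hpos x
    have e1 : tail μ x * (2 - tail μ x) / tail μ x = 2 - tail μ x :=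
      mul_div_cancel_left₀ _ hp.ne'
    have h2 : tail μ x * (2 - tail μ x) / tail μ x ≤ tail (μ.conv μ) x / tail μ x :=
      div_le_div_of_nonneg_right hlb hp.le
    rw [e1] at h2
    linarith
  have hT : ∀ᶠ T in atTop, C * tail μ T < ε / 4 :=
    ((tail_tendsto_zero' (μ := μ)).const_mul C).eventually_lt_const
      (by simpa using by positivity)
  obtain ⟨T, hTlt⟩ := hT.exists
  have hupp : ∀ᶠ x in atTop, tail (μ.conv μ) x / tail μ x < 2 + ε := by
    have hLT : Tendsto (fun x => tail μ (x - T) / tail μ x) atTop (𝓝 1) := by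
      have := hL.2 (-T)
      simpa [sub_eq_add_neg] using this
    have h1 : ∀ᶠ x in atTop, tail μ (x - T) / tail μ x < 1 + ε / 8 :=
      hLT.eventually_lt_const (by linarith)
    filter_upwards [h1, hCev] with x hx1 hx2
    have hp := hpos x
    have key := tail_conv_le' (μ := μ) x T
    have r2 : tail μ (x / 2) / tail μ x ≤ C := (div_le_iff₀ hp).mpr hx2
    have hTnn : (0:ℝ) ≤ tail μ T := tail_nonneg' _
    have step : tail (μ.conv μ) x / tail μ x ≤
        2 * (tail μ (x - T) / tail μ x) + 2 * tail μ T * (tail μ (x / 2) / tail μ x) := by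
      have h3 := div_le_div_of_nonneg_right key hp.le
      refine h3.trans_eq ?_
      ring
    have p1 : 2 * tail μ T * (tail μ (x / 2) / tail μ x) ≤ 2 * tail μ T * C :=
      mul_le_mul_of_nonneg_left r2 (by linarith)
    have e : 2 * tail μ T * C = 2 * (C * tail μ T) := by ring
    linarith
  filter_upwards [hlow, hupp] with x h1 h2
  rw [Real.dist_eq, abs_lt]
  constructor <;> linarith
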